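/- arXiv:2503.16697 — 3 statements merged into one kernel-verified Lean document; each statement's English description precedes it below -/
import Mathlib

section
/- Let k be a field of prime characteristic p, let P be a finite p-group, and let E be a finite group of order prime to p acting on P by automorphisms such that [P,E] = P. Then every E-stable derivation f : kP → kP has image contained in the Jacobson radical J(kP). -/
namespace HHPaper

open MonoidAlgebra

attribute [local instance 100] LieRing.ofAssociativeRing

section Derivations

variable {k A : Type*} [CommRing k] [Ring A] [Algebra k A]

/-- `f` is a derivation on the associative unital `k`-algebra `A`. -/
def IsDerivation (f : Module.End k A) : Prop :=
  ∀ a b : A, f (a * b) = f a * b + a * f b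

lemma IsDerivation.add {f g : Module.End k A} (hf : IsDerivation f) (hg : IsDerivation g) :
    IsDerivation (f + g) := by
  intro a b
  simp only [LinearMap.add_apply, hf a b, hg a b, add_mul, mul_add]
  abel

lemma IsDerivation.zero : IsDerivation (0 : Module.End k A) := by
  intro a b; simp

lemma IsDerivation.smul (c : k) {f : Module.End k A} (hf : IsDerivation f) :
    IsDerivation (c • f) := by
  intro a b
  simp only [LinearMap.smul_apply, hf a b, smul_add, smul_mul_assoc, mul_smul_comm]

lemma IsDerivation.lie {f g : Module.End k A} (hf : IsDerivation f) (hg : IsDerivation g) :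
    IsDerivation ⁅f, g⁆ := by
  intro a b
  simp only [Ring.lie_def, LinearMap.sub_apply, Module.End.mul_apply]
  rw [hg a b, hf a b, map_add, map_add, hf (g a) b, hf a (g b), hg (f a) b, hg a (f b)]
  simp only [sub_mul, mul_sub, add_mul, mul_add]
  abel

variable (k A) in
/-- The Lie algebra of derivations on `A`, as a Lie subalgebra of `Module.End k A`. -/
def derivLie : LieSubalgebra k (Module.End k A) where
  carrier := {f | IsDerivation f}
  add_mem' := fun hf hg => hf.add hg
  zero_mem' := IsDerivation.zero
  smul_mem' := fun c _ hf => hf.smul c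
  lie_mem' := fun hf hg => hf.lie hg

@[simp] lemma mem_derivLie {f : Module.End k A} :
    f ∈ derivLie k A ↔ IsDerivation f := Iff.rfl

variable (k) in
/-- The inner derivation `[c, -]` associated with `c : A`. -/
def innerDeriv (c : A) : Module.End k A :=
  LinearMap.mulLeft k c - LinearMap.mulRight k c

@[simp] lemma innerDeriv_apply (c a : A) : innerDeriv k c a = c * a - a * c := rfl

lemma innerDeriv_isDerivation (c : A) : IsDerivation (innerDeriv k c) := by
  intro a b
  simp only [innerDeriv_apply, sub_mul, mul_sub, mul_assoc]
  abel

lemma innerDeriv_add (c d : A) :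
    innerDeriv k (c + d) = innerDeriv k c + innerDeriv k d := by
  ext a; simp only [innerDeriv_apply, LinearMap.add_apply, add_mul, mul_add]; abel

lemma innerDeriv_smul (s : k) (c : A) :
    innerDeriv k (s • c) = s • innerDeriv k c := by
  ext a
  simp only [innerDeriv_apply, LinearMap.smul_apply, smul_sub, smul_mul_assoc, mul_smul_comm]

lemma innerDeriv_zero : innerDeriv k (0 : A) = 0 := by
  ext a; simp

variable (k A) in
/-- The Lie ideal of inner derivations inside the Lie algebra of derivations. -/
def innerIdeal : LieIdeal k (derivLie k A) where
  carrier := {f | ∃ c : A, (f : Module.End k A) = innerDeriv k c}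
  add_mem' := by
    rintro f g ⟨c, hc⟩ ⟨d, hd⟩
    exact ⟨c + d, by simp [innerDeriv_add, hc, hd]⟩
  zero_mem' := ⟨0, by simp [innerDeriv_zero]⟩
  smul_mem' := by
    rintro s f ⟨c, hc⟩
    exact ⟨s • c, by rw [innerDeriv_smul]; rw [← hc]; rfl⟩
  lie_mem := by
    rintro x m ⟨c, hc⟩
    refine ⟨(x : Module.End k A) c, ?_⟩
    have hx : IsDerivation (x : Module.End k A) := x.2
    ext a
    have hb : ((⁅x, m⁆ : derivLie k A) : Module.End k A) =
        ⁅(x : Module.End k A), (m : Module.End k A)⁆ := rfl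
    rw [hb, hc]
    simp only [Ring.lie_def, LinearMap.sub_apply, Module.End.mul_apply, innerDeriv_apply,
      map_sub, hx c a, hx a c]
    abel

variable (k A) in
/-- First Hochschild cohomology of `A`, as the quotient Lie algebra of derivations
modulo inner derivations. -/
abbrev HH1 := (derivLie k A) ⧸ (innerIdeal k A)

variable (k A) in
/-- The Jacobson radical of `A`, regarded as a `k`-subspace of `A`. -/
def jacRad : Submodule k A :=
  Submodule.restrictScalars k (Ideal.jacobson (⊥ : Ideal A))

variable (k A) in
/-- The Lie subalgebra of derivations with image contained in the `m`-th power of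
the Jacobson radical. -/
def derivRadLie (m : ℕ) : LieSubalgebra k (Module.End k A) where
  carrier := {f | IsDerivation f ∧ LinearMap.range f ≤ (jacRad k A) ^ m}
  add_mem' := by
    rintro f g ⟨hf, hf'⟩ ⟨hg, hg'⟩
    refine ⟨hf.add hg, ?_⟩
    rintro x ⟨a, rfl⟩
    exact add_mem (hf' ⟨a, rfl⟩) (hg' ⟨a, rfl⟩)
  zero_mem' := ⟨IsDerivation.zero, by rintro x ⟨a, rfl⟩; simp⟩
  smul_mem' := by
    rintro s f ⟨hf, hf'⟩
    refine ⟨hf.smul s, ?_⟩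
    rintro x ⟨a, rfl⟩
    exact Submodule.smul_mem _ s (hf' ⟨a, rfl⟩)
  lie_mem' := by
    rintro f g ⟨hf, hf'⟩ ⟨hg, hg'⟩
    refine ⟨hf.lie hg, ?_⟩
    rintro x ⟨a, rfl⟩
    have : ⁅f, g⁆ a = f (g a) - g (f a) := by
      simp [Ring.lie_def, Module.End.mul_apply]
    rw [this]
    exact sub_mem (hf' ⟨g a, rfl⟩) (hg' ⟨f a, rfl⟩)

@[simp] lemma mem_derivRadLie {m : ℕ} {f : Module.End k A} :
    f ∈ derivRadLie k A m ↔ IsDerivation f ∧ LinearMap.range f ≤ (jacRad k A) ^ m := Iff.rfl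

variable (k A) in
/-- The Loewy length of `A`: the least positive `n` with `J(A)^n = 0`. -/
noncomputable def loewyLength : ℕ :=
  sInf {n : ℕ | 0 < n ∧ (jacRad k A) ^ n = ⊥}

/-- A semisimple-style multiplicity freeness: any two isomorphic simple submodules
coincide. -/
def IsMultiplicityFree (R M : Type*) [Ring R] [AddCommGroup M] [Module R M] : Prop :=
  ∀ S T : Submodule R M, IsSimpleModule R S → IsSimpleModule R T →
    Nonempty (S ≃ₗ[R] T) → S = T

end Derivations


section GroupAlgebra

open MonoidAlgebra

variable (k : Type*) [CommRing k] {P E : Type*} [Group P] [Group E]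

/-- The subgroup `[P,E]` generated by the elements `(ᵉu)u⁻¹`. -/
def commSubgroupE (φ : E →* MulAut P) : Subgroup P :=
  Subgroup.closure {x : P | ∃ (e : E) (u : P), x = φ e u * u⁻¹}

/-- A linear endomorphism of `kP` is `E`-stable if it commutes with the `E`-action. -/
def IsEStable (φ : E →* MulAut P) (f : Module.End k (MonoidAlgebra k P)) : Prop :=
  ∀ (e : E) (a : MonoidAlgebra k P),
    f (MonoidAlgebra.domCongr k k (φ e) a) = MonoidAlgebra.domCongr k k (φ e) (f a)

/-- The Lie algebra `Der(kP)^E` of `E`-stable derivations on the group algebra `kP`. -/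
def eStableDerivLie (φ : E →* MulAut P) :
    LieSubalgebra k (Module.End k (MonoidAlgebra k P)) where
  carrier := {f | IsDerivation f ∧ IsEStable k φ f}
  add_mem' := by
    rintro f g ⟨hf, hf'⟩ ⟨hg, hg'⟩
    exact ⟨hf.add hg, fun e a => by simp [LinearMap.add_apply, hf' e a, hg' e a]⟩
  zero_mem' := ⟨IsDerivation.zero, fun e a => by simp⟩
  smul_mem' := by
    rintro s f ⟨hf, hf'⟩
    refine ⟨hf.smul s, fun e a => ?_⟩
    simp only [LinearMap.smul_apply, hf' e a, map_smul]
  lie_mem' := by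
    rintro f g ⟨hf, hf'⟩ ⟨hg, hg'⟩
    refine ⟨hf.lie hg, fun e a => ?_⟩
    simp only [Ring.lie_def, LinearMap.sub_apply, Module.End.mul_apply, hf' e, hg' e, map_sub]

@[simp] lemma mem_eStableDerivLie {φ : E →* MulAut P} {f : Module.End k (MonoidAlgebra k P)} :
    f ∈ eStableDerivLie k φ ↔ IsDerivation f ∧ IsEStable k φ f := Iff.rfl

end GroupAlgebra

section Commutant

variable (k : Type*) [CommRing k] {Q : Type*} [AddCommGroup Q] [Module k Q]
  {E : Type*} [Group E]

/-- The Lie subalgebra of `Module.End k Q` of endomorphisms commuting with a given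
`E`-action, i.e. `End_{kE}(Q)`. -/
def commutantLie (ρ : E →* (Q ≃ₗ[k] Q)) : LieSubalgebra k (Module.End k Q) where
  carrier := {g | ∀ (e : E) (x : Q), g (ρ e x) = ρ e (g x)}
  add_mem' := by
    intro f g hf hg e x
    simp [LinearMap.add_apply, hf e x, hg e x]
  zero_mem' := by intro e x; simp
  smul_mem' := by
    intro s f hf e x
    simp [LinearMap.smul_apply, hf e x]
  lie_mem' := by
    intro f g hf hg e x
    simp only [Ring.lie_def, LinearMap.sub_apply, Module.End.mul_apply, hf e, hg e, map_sub]

end Commutant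

section Statement0Aux

open MonoidAlgebra

variable {k : Type*} [Field k] {P : Type*} [Group P]

/-- The augmentation algebra homomorphism `kP → k`. -/
noncomputable def aug (k : Type*) [Field k] (P : Type*) [Group P] :
    MonoidAlgebra k P →ₐ[k] k :=
  MonoidAlgebra.lift k k P 1

@[simp] lemma aug_single (u : P) (c : k) :
    aug k P (MonoidAlgebra.single u c) = c := by
  simp [aug, MonoidAlgebra.lift_single]

lemma aug_domCongr (e : P ≃* P) (x : MonoidAlgebra k P) :
    aug k P (MonoidAlgebra.domCongr k k e x) = aug k P x := by
  induction x using MonoidAlgebra.induction_on with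
  | of g =>
    rw [MonoidAlgebra.of_apply, MonoidAlgebra.domCongr_single, aug_single, aug_single]
  | add a b iha ihb => rw [map_add, map_add, map_add, iha, ihb]
  | smul r a ih => rw [map_smul, map_smul, map_smul, ih]

/-- A nonzero module over the group algebra of a finite `p`-group in characteristic `p`
has a nonzero `P`-fixed vector. -/
lemma exists_fixed_ne_zero {p : ℕ} [Fact p.Prime] [CharP k p] [Fintype P]
    (hP : IsPGroup p P) (V : Type*) [AddCommGroup V]
    [Module (MonoidAlgebra k P) V] [Nontrivial V] :
    ∃ v : V, v ≠ 0 ∧ ∀ u : P, (MonoidAlgebra.single u 1 : MonoidAlgebra k P) • v = v := by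
  classical
  have hp0 : ∀ x : V, p • x = 0 := by
    intro x
    have h2 : ((p : ℕ) : MonoidAlgebra k P) = 0 := by
      rw [← map_natCast (algebraMap k (MonoidAlgebra k P)) p, CharP.cast_eq_zero k p, map_zero]
    rw [← Nat.cast_smul_eq_nsmul (MonoidAlgebra k P), h2, zero_smul]
  haveI : NeZero p := ⟨(Fact.out : p.Prime).ne_zero⟩
  haveI : Module (ZMod p) V := AddCommGroup.zmodModule hp0
  obtain ⟨v₀, hv₀⟩ := exists_ne (0 : V)
  haveI : Module.Finite (ZMod p) ↥(Submodule.span (ZMod p)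
      (Set.range (fun u : P => (MonoidAlgebra.single u 1 : MonoidAlgebra k P) • v₀))) :=
    Module.Finite.span_of_finite (ZMod p)
      (Set.finite_range (fun u : P => (MonoidAlgebra.single u 1 : MonoidAlgebra k P) • v₀))
  set W : Submodule (ZMod p) V := Submodule.span (ZMod p)
    (Set.range (fun u : P => (MonoidAlgebra.single u 1 : MonoidAlgebra k P) • v₀)) with hW
  haveI : Finite W := Module.finite_of_finite (ZMod p)
  have hstab : ∀ (u : P) (w : V), w ∈ W →
      (MonoidAlgebra.single u 1 : MonoidAlgebra k P) • w ∈ W := by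
    intro u w hw
    set g : V →+ V :=
      { toFun := fun x => (MonoidAlgebra.single u 1 : MonoidAlgebra k P) • x
        map_zero' := smul_zero _
        map_add' := fun a b => smul_add _ a b } with hg
    have hmap : Submodule.map (g.toZModLinearMap p) W ≤ W := by
      rw [hW, Submodule.map_span, Submodule.span_le]
      rintro _ ⟨_, ⟨e, rfl⟩, rfl⟩
      apply Submodule.subset_span
      refine ⟨u * e, ?_⟩
      show (MonoidAlgebra.single (u * e) 1 : MonoidAlgebra k P) • v₀ =
        (MonoidAlgebra.single u 1 : MonoidAlgebra k P) •
          ((MonoidAlgebra.single e 1 : MonoidAlgebra k P) • v₀)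
      rw [smul_smul, MonoidAlgebra.single_mul_single, one_mul]
    exact hmap ⟨w, hw, rfl⟩
  letI : MulAction P W :=
    { smul := fun u w => ⟨(MonoidAlgebra.single u 1 : MonoidAlgebra k P) • (w : V),
        hstab u _ w.2⟩
      one_smul := fun w => Subtype.ext (by
        show (MonoidAlgebra.single (1 : P) (1 : k) : MonoidAlgebra k P) • (w : V) = w
        rw [← MonoidAlgebra.one_def, one_smul])
      mul_smul := fun u x w => Subtype.ext (by
        show (MonoidAlgebra.single (u * x) (1 : k) : MonoidAlgebra k P) • (w : V) =
          (MonoidAlgebra.single u 1 : MonoidAlgebra k P) •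
            ((MonoidAlgebra.single x 1 : MonoidAlgebra k P) • (w : V))
        rw [smul_smul, MonoidAlgebra.single_mul_single, one_mul]) }
  have hfix0 : (0 : W) ∈ MulAction.fixedPoints P W := by
    intro u
    exact Subtype.ext (by
      show (MonoidAlgebra.single u 1 : MonoidAlgebra k P) • ((0 : W) : V) = ((0 : W) : V)
      rw [Submodule.coe_zero, smul_zero])
  have hv₀W : v₀ ∈ W := Submodule.subset_span ⟨1, by
    show (MonoidAlgebra.single (1 : P) (1 : k) : MonoidAlgebra k P) • v₀ = v₀
    rw [← MonoidAlgebra.one_def, one_smul]⟩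
  haveI : Nontrivial W := ⟨⟨⟨v₀, hv₀W⟩, 0, by simpa [Submodule.mk_eq_zero] using hv₀⟩⟩
  have hdvd : p ∣ Nat.card W := by
    haveI := Fintype.ofFinite W
    rw [Nat.card_eq_fintype_card, Module.card_eq_pow_finrank (K := ZMod p) (V := W), ZMod.card]
    exact dvd_pow_self p Module.finrank_pos.ne'
  have hcong := hP.card_modEq_card_fixedPoints (α := W)
  have hdvd2 : p ∣ Nat.card (MulAction.fixedPoints P W) :=
    Nat.modEq_zero_iff_dvd.mp (hcong.symm.trans (Nat.modEq_zero_iff_dvd.mpr hdvd))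
  haveI : Nonempty (MulAction.fixedPoints P W) := ⟨⟨0, hfix0⟩⟩
  have hpos : 0 < Nat.card (MulAction.fixedPoints P W) := Nat.card_pos
  have h1lt : 1 < Nat.card (MulAction.fixedPoints P W) :=
    lt_of_lt_of_le (Fact.out : p.Prime).one_lt (Nat.le_of_dvd hpos hdvd2)
  haveI : Nontrivial (MulAction.fixedPoints P W) := Finite.one_lt_card_iff_nontrivial.mp h1lt
  obtain ⟨w, hwne⟩ := exists_ne (⟨0, hfix0⟩ : MulAction.fixedPoints P W)
  refine ⟨((w : W) : V), ?_, ?_⟩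
  · intro h0
    apply hwne
    ext
    exact h0
  · intro u
    exact congrArg Subtype.val (w.2 u)

lemma aug_eq_zero_mem_jacobson {p : ℕ} [Fact p.Prime] [CharP k p] [Fintype P]
    (hP : IsPGroup p P) {x : MonoidAlgebra k P} (hx : aug k P x = 0) :
    x ∈ Ideal.jacobson (⊥ : Ideal (MonoidAlgebra k P)) := by
  classical
  have key : ∀ M : Ideal (MonoidAlgebra k P), M.IsMaximal → x ∈ M := by
    intro M hM
    have hu : ∀ u : P, (MonoidAlgebra.single u 1 - 1 : MonoidAlgebra k P) ∈ M := by
      haveI : Nontrivial (MonoidAlgebra k P ⧸ M) :=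
        Submodule.Quotient.nontrivial_iff.mpr hM.ne_top
      obtain ⟨v, hv0, hvfix⟩ := exists_fixed_ne_zero (k := k) hP (MonoidAlgebra k P ⧸ M)
      set N : Submodule (MonoidAlgebra k P) (MonoidAlgebra k P ⧸ M) :=
        { carrier := {w | ∀ u : P, (MonoidAlgebra.single u 1 : MonoidAlgebra k P) • w = w}
          add_mem' := fun ha hb u => by rw [smul_add, ha u, hb u]
          zero_mem' := fun u => smul_zero _
          smul_mem' := by
            intro r w hw
            show ∀ u : P, (MonoidAlgebra.single u 1 : MonoidAlgebra k P) • (r • w) = r • w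
            induction r using MonoidAlgebra.induction_on with
            | of g =>
              intro u
              rw [MonoidAlgebra.of_apply, smul_smul, MonoidAlgebra.single_mul_single, one_mul,
                hw (u * g)]
              exact (hw g).symm
            | add a b iha ihb =>
              intro u
              rw [add_smul, smul_add, iha u, ihb u]
            | smul r a ih =>
              intro u
              rw [Algebra.smul_def, mul_smul, smul_smul,
                ← Algebra.commutes r (MonoidAlgebra.single u 1), mul_smul, ih u] } with hN
      have hvN : v ∈ N := hvfix
      obtain ⟨x₀, hx₀⟩ := Submodule.Quotient.mk_surjective M v
      have hx₀M : x₀ ∉ M := by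
        intro hmem
        apply hv0
        rw [← hx₀]
        exact (Submodule.Quotient.mk_eq_zero M).mpr hmem
      set M' : Ideal (MonoidAlgebra k P) := N.comap M.mkQ with hM'
      have hMM' : M ≤ M' := by
        intro y hy
        show M.mkQ y ∈ N
        have : M.mkQ y = 0 := (Submodule.Quotient.mk_eq_zero M).mpr hy
        rw [this]
        exact N.zero_mem
      have hlt : M < M' := by
        refine lt_of_le_of_ne hMM' ?_
        intro heq
        apply hx₀M
        rw [heq]
        show M.mkQ x₀ ∈ N
        rw [show M.mkQ x₀ = v from hx₀]
        exact hvN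
      have htop : M' = ⊤ := (Ideal.isMaximal_def.mp hM).2 M' hlt
      intro u
      have h1 : (1 : MonoidAlgebra k P) ∈ M' := htop ▸ Submodule.mem_top
      have h2 : ∀ u' : P,
          (MonoidAlgebra.single u' 1 : MonoidAlgebra k P) • M.mkQ 1 = M.mkQ 1 := h1
      have h3 := h2 u
      rw [show (MonoidAlgebra.single u 1 : MonoidAlgebra k P) • M.mkQ 1 =
          M.mkQ (MonoidAlgebra.single u 1 * 1) from rfl, mul_one] at h3
      exact (Submodule.Quotient.eq M).mp h3
    have claim : ∀ r : MonoidAlgebra k P,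
        r - algebraMap k (MonoidAlgebra k P) (aug k P r) ∈ M := by
      intro r
      induction r using MonoidAlgebra.induction_on with
      | of g =>
        rw [MonoidAlgebra.of_apply, aug_single, map_one]
        exact hu g
      | add a b iha ihb =>
        have : a + b - algebraMap k (MonoidAlgebra k P) (aug k P (a + b)) =
            (a - algebraMap k (MonoidAlgebra k P) (aug k P a)) +
            (b - algebraMap k (MonoidAlgebra k P) (aug k P b)) := by
          rw [map_add, map_add]; abel
        rw [this]
        exact M.add_mem iha ihb
      | smul r a ih =>
        have : r • a - algebraMap k (MonoidAlgebra k P) (aug k P (r • a)) =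
            algebraMap k (MonoidAlgebra k P) r *
              (a - algebraMap k (MonoidAlgebra k P) (aug k P a)) := by
          rw [map_smul, smul_eq_mul, map_mul, mul_sub, Algebra.smul_def]
        rw [this]
        exact Ideal.mul_mem_left M _ ih
    have := claim x
    rw [hx, map_zero, sub_zero] at this
    exact this
  rw [Ideal.jacobson]
  exact Submodule.mem_sInf.mpr fun M hM => key M hM.2

end Statement0Aux

/-- Let `k` be a field of prime characteristic `p`, `P` a finite `p`-group,
and `E` a finite group of order prime to `p` acting on `P` by automorphisms with `[P,E] = P`.
Then every `E`-stable derivation on `kP` has image contained in the Jacobson radical `J(kP)`. -/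
theorem stmt0 (k : Type*) [Field k] (p : ℕ) [Fact p.Prime] [CharP k p]
    (P : Type*) [Group P] [Fintype P] (hP : IsPGroup p P)
    (E : Type*) [Group E] [Fintype E] (hE : ¬ p ∣ Fintype.card E)
    (φ : E →* MulAut P) (hPE : commSubgroupE φ = ⊤)
    (f : Module.End k (MonoidAlgebra k P))
    (hf : IsDerivation f) (hstable : IsEStable k φ f) :
    LinearMap.range f ≤ jacRad k (MonoidAlgebra k P) := by
  classical
  rintro _ ⟨a, rfl⟩
  suffices h : aug k P (f a) = 0 by
    show f a ∈ Submodule.restrictScalars k (Ideal.jacobson (⊥ : Ideal (MonoidAlgebra k P)))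
    exact aug_eq_zero_mem_jacobson hP h
  set lam : P → k := fun u => aug k P (f (MonoidAlgebra.single u 1)) with hlam
  have hone : f 1 = 0 := by
    have h := hf 1 1
    rw [mul_one, one_mul, mul_one] at h
    have h2 : f 1 + f 1 = f 1 + 0 := by rw [add_zero, ← h]
    exact (add_left_cancel h2)
  have hmul : ∀ u v : P, lam (u * v) = lam u + lam v := by
    intro u v
    have h1 : (MonoidAlgebra.single (u * v) 1 : MonoidAlgebra k P) =
        MonoidAlgebra.single u 1 * MonoidAlgebra.single v 1 := by
      rw [MonoidAlgebra.single_mul_single, one_mul]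
    show aug k P (f (MonoidAlgebra.single (u * v) 1)) = _
    rw [h1, hf, map_add, map_mul, map_mul, aug_single, aug_single, mul_one, one_mul]
  have hlam1 : lam 1 = 0 := by
    show aug k P (f (MonoidAlgebra.single 1 1)) = 0
    rw [← MonoidAlgebra.one_def, hone, map_zero]
  have hinv : ∀ u : P, lam u⁻¹ = - lam u := by
    intro u
    have := hmul u u⁻¹
    rw [mul_inv_cancel, hlam1] at this
    linear_combination -this
  have hEstab : ∀ (e : E) (u : P), lam (φ e u) = lam u := by
    intro e u
    have h1 : (MonoidAlgebra.domCongr k k ((φ e) : P ≃* P))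
        (MonoidAlgebra.single u 1) = MonoidAlgebra.single (φ e u) 1 := by
      rw [MonoidAlgebra.domCongr_single]
    show aug k P (f (MonoidAlgebra.single (φ e u) 1)) = aug k P (f (MonoidAlgebra.single u 1))
    rw [← h1, hstable e, aug_domCongr]
  have hgen : ∀ u : P, lam u = 0 := by
    intro u
    have hu : u ∈ commSubgroupE φ := hPE ▸ Subgroup.mem_top u
    refine Subgroup.closure_induction (p := fun x _ => lam x = 0) ?_ hlam1 ?_ ?_ hu
    · rintro x ⟨e, w, rfl⟩
      simp only [hmul, hEstab, hinv, add_neg_cancel]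
    · intro x y _ _ hx hy
      rw [hmul, hx, hy, add_zero]
    · intro x _ hx
      rw [hinv, hx, neg_zero]
  induction a using MonoidAlgebra.induction_on with
  | of g =>
    rw [MonoidAlgebra.of_apply]
    exact hgen g
  | add a b iha ihb => rw [map_add, map_add, iha, ihb, add_zero]
  | smul r a ih => rw [map_smul, map_smul, ih, smul_zero]

end HHPaper
end

section
/- Let k be a field of prime characteristic p, let P be a finite p-group, and let E be a finite group of order prime to p acting on P by automorphisms with [P,E] = P; let e be an element of the centre Z(E). Inside the group algebra k(P⋊E), the subspace kP·e (the k-span of the elements ue, u ∈ P) is an E-stable kP-kP-sub-bimodule which is a direct summand of k(P⋊E) as a kP-kP-bimodule, and every E-stable k-linear map f : kP → kP·e satisfying the Leibniz rule f(ab) = f(a)b + a f(b) for all a,b ∈ kP (products taken in k(P⋊E)) has image contained in J(kP)·e. -/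
namespace HHPaper

open MonoidAlgebra

attribute [local instance] LieRing.ofAssociativeRing

section SDP

open SemidirectProduct

variable (k : Type*) [CommRing k] {P E : Type*} [Group P] [Group E] (φ : E →* MulAut P)

/-- The canonical embedding of `kP` into `k(P⋊E)`. -/
noncomputable abbrev iotaP : MonoidAlgebra k P →ₐ[k] MonoidAlgebra k (P ⋊[φ] E) :=
  MonoidAlgebra.mapDomainAlgHom k k (SemidirectProduct.inl : P →* P ⋊[φ] E)

/-- Conjugation by `e ∈ E` on `k(P⋊E)`. -/
noncomputable def conjE (e : E) (x : MonoidAlgebra k (P ⋊[φ] E)) :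
    MonoidAlgebra k (P ⋊[φ] E) :=
  MonoidAlgebra.single (inr e : P ⋊[φ] E) 1 * x * MonoidAlgebra.single (inr e⁻¹ : P ⋊[φ] E) 1

/-- The `k`-span `kP·e` of the elements `ue`, `u ∈ P`, inside `k(P⋊E)`. -/
noncomputable def kPe (e : E) : Submodule k (MonoidAlgebra k (P ⋊[φ] E)) :=
  Submodule.span k {x | ∃ u : P, x = MonoidAlgebra.single ((inl u : P ⋊[φ] E) * inr e) 1}

end SDP

section JacAux

variable {k : Type*} [Field k] {p : ℕ} [Fact p.Prime] [CharP k p]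
variable {P : Type*} [Group P] [Fintype P]

lemma aux_exists_fixed_vector (hP : IsPGroup p P) {S : Type*} [AddCommGroup S]
    [Module (MonoidAlgebra k P) S] {v₀ : S} (hv₀ : v₀ ≠ 0) :
    ∃ v : S, v ≠ 0 ∧ ∀ u : P, (single u 1 : MonoidAlgebra k P) • v = v := by
  classical
  haveI : NeZero p := ⟨(Fact.out : p.Prime).ne_zero⟩
  letI : Module (ZMod p) S :=
    Module.compHom S ((algebraMap k (MonoidAlgebra k P)).comp (ZMod.castHom dvd_rfl k))
  have hsmul : ∀ (c : ZMod p) (y : S),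
      c • y = ((algebraMap k (MonoidAlgebra k P)) (ZMod.castHom dvd_rfl k c)) • y :=
    fun _ _ => rfl
  set O : Set S := Set.range (fun u : P => (single u 1 : MonoidAlgebra k P) • v₀) with hO
  set V : Submodule (ZMod p) S := Submodule.span (ZMod p) O with hV
  have hstab : ∀ (u : P) (x : S), x ∈ V → (single u 1 : MonoidAlgebra k P) • x ∈ V := by
    intro u x hx
    induction hx using Submodule.span_induction with
    | mem x h =>
        obtain ⟨w, rfl⟩ := h
        rw [← mul_smul, single_mul_single, one_mul]
        exact Submodule.subset_span ⟨u * w, rfl⟩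
    | zero => rw [smul_zero]; exact V.zero_mem
    | add x y _ _ hx hy => rw [smul_add]; exact V.add_mem hx hy
    | smul c x _ hx =>
        have hc : (single u 1 : MonoidAlgebra k P) • (c • x)
            = c • ((single u 1 : MonoidAlgebra k P) • x) := by
          rw [hsmul, hsmul, ← mul_smul, ← mul_smul, Algebra.commutes]
        rw [hc]; exact V.smul_mem c hx
  have hOfin : O.Finite := Set.finite_range _
  haveI : Module.Finite (ZMod p) V := Module.Finite.span_of_finite _ hOfin
  haveI : Finite V := Module.finite_of_finite (ZMod p)
  haveI : Fintype V := Fintype.ofFinite _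
  have hv₀V : v₀ ∈ V := Submodule.subset_span ⟨1, by show (single (1:P) (1:k) : MonoidAlgebra k P) • v₀ = v₀; rw [← one_def, one_smul]⟩
  haveI : Nontrivial V := ⟨⟨⟨v₀, hv₀V⟩, 0, by simp [hv₀]⟩⟩
  letI : SMul P V := ⟨fun u x => ⟨(single u 1 : MonoidAlgebra k P) • (x : S), hstab u x x.2⟩⟩
  letI : MulAction P V :=
    { one_smul := fun x => Subtype.ext (by
        show (single (1:P) (1:k) : MonoidAlgebra k P) • (x : S) = x
        rw [← one_def, one_smul])
      mul_smul := fun u w x => Subtype.ext (by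
        show (single (u*w) (1:k) : MonoidAlgebra k P) • (x : S)
            = (single u 1 : MonoidAlgebra k P) • ((single w 1 : MonoidAlgebra k P) • (x : S))
        rw [← mul_smul, single_mul_single, one_mul]) }
  have hcard : p ∣ Nat.card V := by
    rw [Nat.card_eq_fintype_card, Module.card_eq_pow_finrank (K := ZMod p), ZMod.card]
    exact dvd_pow_self p (Module.finrank_pos (R := ZMod p) (M := V)).ne'
  have h0 : (0 : V) ∈ MulAction.fixedPoints P V := by
    intro u
    exact Subtype.ext (smul_zero _)
  obtain ⟨b, hb, hb0⟩ := hP.exists_fixed_point_of_prime_dvd_card_of_fixed_point (α := V) hcard h0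
  refine ⟨(b : S), ?_, fun u => ?_⟩
  · intro hc
    exact hb0 ((Submodule.mk_eq_zero _ _).mpr hc).symm
  · exact congrArg Subtype.val (hb u)

lemma aux_mem_jacRad (hP : IsPGroup p P) (a : MonoidAlgebra k P)
    (ha : MonoidAlgebra.lift k k P 1 a = 0) : a ∈ jacRad k (MonoidAlgebra k P) := by
  classical
  rw [jacRad, Submodule.restrictScalars_mem, Ideal.jacobson]
  refine Submodule.mem_sInf.mpr ?_
  rintro 𝔪 ⟨-, hmax⟩
  haveI hsimple := (isSimpleModule_iff_isCoatom (R := MonoidAlgebra k P)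
    (M := MonoidAlgebra k P) (m := 𝔪)).mpr hmax.out
  have hv₀ : (Submodule.Quotient.mk (1 : MonoidAlgebra k P) : MonoidAlgebra k P ⧸ 𝔪) ≠ 0 := by
    rw [Ne, Submodule.Quotient.mk_eq_zero]
    intro h1
    exact hmax.ne_top ((Ideal.eq_top_iff_one 𝔪).mpr h1)
  obtain ⟨v, hv, hfix⟩ := aux_exists_fixed_vector (k := k) hP hv₀
  have key : ∀ c : MonoidAlgebra k P, MonoidAlgebra.lift k k P 1 c = 0 → c • v = 0 := by
    intro c hc
    have h1 : c = ∑ u ∈ c.coeff.support, single u (c.coeff u) := (MonoidAlgebra.sum_coeff_single c).symm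
    have h2 : ∀ u ∈ c.coeff.support, (single u (c.coeff u) : MonoidAlgebra k P) • v
        = (single (1:P) (c.coeff u) : MonoidAlgebra k P) • v := by
      intro u _
      have hs : (single u (c.coeff u) : MonoidAlgebra k P) = single (1:P) (c.coeff u) * single u 1 := by
        rw [single_mul_single, one_mul, mul_one]
      rw [hs, mul_smul, hfix u]
    have h3 : (∑ u ∈ c.coeff.support, (single (1:P) (c.coeff u) : MonoidAlgebra k P))
        = single (1:P) (∑ u ∈ c.coeff.support, c.coeff u) :=
      (map_sum (MonoidAlgebra.singleAddHom (1:P)) (fun u => c.coeff u) c.coeff.support).symm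
    have h4 : ∑ u ∈ c.coeff.support, c.coeff u = 0 := by
      rw [MonoidAlgebra.lift_apply] at hc
      simpa [Finsupp.sum] using hc
    conv_lhs => rw [h1]
    rw [Finset.sum_smul, Finset.sum_congr rfl h2, ← Finset.sum_smul, h3, h4]
    simp
  have hspan : Submodule.span (MonoidAlgebra k P) {v} = ⊤ := by
    rcases eq_bot_or_eq_top (Submodule.span (MonoidAlgebra k P) {v}) with h | h
    · exact absurd (Submodule.span_singleton_eq_bot.mp h) hv
    · exact h
  obtain ⟨b, hb⟩ := Submodule.mem_span_singleton.mp
    (hspan ▸ Submodule.mem_top :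
      (Submodule.Quotient.mk (1 : MonoidAlgebra k P) : MonoidAlgebra k P ⧸ 𝔪)
        ∈ Submodule.span (MonoidAlgebra k P) {v})
  refine (Submodule.Quotient.mk_eq_zero 𝔪).mp ?_
  have hmk : (Submodule.Quotient.mk a : MonoidAlgebra k P ⧸ 𝔪)
      = a • (Submodule.Quotient.mk (1 : MonoidAlgebra k P)) := by
    rw [← Submodule.Quotient.mk_smul, smul_eq_mul, mul_one]
  rw [hmk, ← hb, ← mul_smul]
  exact key _ (by rw [map_mul, ha, zero_mul])

end JacAux

section Stmt6Aux
open SemidirectProduct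

theorem stmt6aux (k : Type*) [Field k] (p : ℕ) [Fact p.Prime] [CharP k p]
    (P : Type*) [Group P] [Fintype P] (hP : IsPGroup p P)
    (E : Type*) [Group E] [Fintype E] (hE : ¬ p ∣ Fintype.card E)
    (φ : E →* MulAut P) (hPE : commSubgroupE φ = ⊤)
    (e : E) (he : e ∈ Subgroup.center E) :
    -- `kP·e` is a `kP`-`kP`-sub-bimodule of `k(P⋊E)`
    (∀ (a : MonoidAlgebra k P) (x : MonoidAlgebra k (P ⋊[φ] E)), x ∈ kPe k φ e →
      iotaP k φ a * x ∈ kPe k φ e ∧ x * iotaP k φ a ∈ kPe k φ e) ∧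
    -- `kP·e` is `E`-stable
    (∀ (e' : E) (x : MonoidAlgebra k (P ⋊[φ] E)), x ∈ kPe k φ e →
      conjE k φ e' x ∈ kPe k φ e) ∧
    -- `kP·e` is a direct summand of `k(P⋊E)` as a `kP`-`kP`-bimodule
    (∃ T : Submodule k (MonoidAlgebra k (P ⋊[φ] E)),
      (∀ (a : MonoidAlgebra k P) (x : MonoidAlgebra k (P ⋊[φ] E)), x ∈ T →
        iotaP k φ a * x ∈ T ∧ x * iotaP k φ a ∈ T) ∧
      IsCompl (kPe k φ e) T) ∧
    -- every `E`-stable derivation `kP → kP·e` has image in `J(kP)·e`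
    (∀ f : MonoidAlgebra k P →ₗ[k] MonoidAlgebra k (P ⋊[φ] E),
      (∀ a b : MonoidAlgebra k P, f (a * b) = f a * iotaP k φ b + iotaP k φ a * f b) →
      LinearMap.range f ≤ kPe k φ e →
      (∀ (e' : E) (a : MonoidAlgebra k P),
        f (MonoidAlgebra.domCongr k k (φ e') a) = conjE k φ e' (f a)) →
      LinearMap.range f ≤ Submodule.map
        (LinearMap.mulRight k (MonoidAlgebra.single ((SemidirectProduct.inr e : P ⋊[φ] E)) 1))
        ((jacRad k (MonoidAlgebra k P)).map (iotaP k φ).toLinearMap)) := by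
  classical
  -- group-theoretic facts
  have hgrp1 : ∀ (e' : E) (v : P), (inr e' : P ⋊[φ] E) * inl v = inl (φ e' v) * inr e' := by
    intro e' v
    rw [SemidirectProduct.inl_aut, mul_assoc, ← map_mul, inv_mul_cancel, map_one, mul_one]
  have hcent : ∀ e' : E, e' * (e * e'⁻¹) = e := by
    intro e'
    rw [← mul_assoc, Subgroup.mem_center_iff.mp he e', mul_inv_cancel_right]
  -- the elements σ e' = e' viewed in k(P⋊E)
  have hσmul : ∀ a b : E, (single (inr a : P ⋊[φ] E) (1:k)) * single (inr b : P ⋊[φ] E) 1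
      = single (inr (a*b) : P ⋊[φ] E) 1 := by
    intro a b
    rw [single_mul_single, one_mul, ← map_mul]
  have hι : ∀ (v : P) (c : k), iotaP k φ (single v c) = single (inl v : P ⋊[φ] E) c := by
    intro v c
    simp [MonoidAlgebra.mapDomain_single]
  -- key commutation relation σ e' ⬝ ι b = ι (ᵉ'b) ⬝ σ e'
  have K1 : ∀ (e' : E) (b : MonoidAlgebra k P),
      single (inr e' : P ⋊[φ] E) (1:k) * iotaP k φ b
        = iotaP k φ (domCongr k k (φ e') b) * single (inr e' : P ⋊[φ] E) 1 := by
    intro e' b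
    induction b using MonoidAlgebra.induction_linear with
    | zero => simp
    | add f g hf hg => rw [map_add, mul_add, hf, hg, map_add, map_add, add_mul]
    | single v c =>
        rw [hι, single_mul_single, one_mul, hgrp1, domCongr_single, hι, single_mul_single,
          mul_one]
  -- the generic sub-bimodule lemmas
  have hleft : ∀ (s : Set (P ⋊[φ] E)),
      (∀ (v : P) (g : P ⋊[φ] E), g ∈ s → (inl v : P ⋊[φ] E) * g ∈ s) →
      ∀ (a : MonoidAlgebra k P) (x : MonoidAlgebra k (P ⋊[φ] E)),
        x ∈ Submodule.span k ((fun g => single g (1:k)) '' s) →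
        iotaP k φ a * x ∈ Submodule.span k ((fun g => single g (1:k)) '' s) := by
    intro s hl a x hx
    induction hx using Submodule.span_induction with
    | mem x hxs =>
        obtain ⟨g, hg, rfl⟩ := hxs
        induction a using MonoidAlgebra.induction_linear with
        | zero => rw [map_zero, zero_mul]; exact Submodule.zero_mem _
        | add f f' hf hf' => rw [map_add, add_mul]; exact Submodule.add_mem _ hf hf'
        | single v c =>
            rw [hι, single_mul_single, mul_one]
            have hc : (single ((inl v : P ⋊[φ] E) * g) c)
                = c • single ((inl v : P ⋊[φ] E) * g) (1:k) := by
              rw [smul_single', mul_one]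
            rw [hc]
            exact Submodule.smul_mem _ c (Submodule.subset_span ⟨inl v * g, hl v g hg, rfl⟩)
    | zero => rw [mul_zero]; exact Submodule.zero_mem _
    | add x y _ _ hx hy => rw [mul_add]; exact Submodule.add_mem _ hx hy
    | smul c x _ hx => rw [mul_smul_comm]; exact Submodule.smul_mem _ c hx
  have hright : ∀ (s : Set (P ⋊[φ] E)),
      (∀ (v : P) (g : P ⋊[φ] E), g ∈ s → g * (inl v : P ⋊[φ] E) ∈ s) →
      ∀ (a : MonoidAlgebra k P) (x : MonoidAlgebra k (P ⋊[φ] E)),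
        x ∈ Submodule.span k ((fun g => single g (1:k)) '' s) →
        x * iotaP k φ a ∈ Submodule.span k ((fun g => single g (1:k)) '' s) := by
    intro s hr a x hx
    induction hx using Submodule.span_induction with
    | mem x hxs =>
        obtain ⟨g, hg, rfl⟩ := hxs
        induction a using MonoidAlgebra.induction_linear with
        | zero => rw [map_zero, mul_zero]; exact Submodule.zero_mem _
        | add f f' hf hf' => rw [map_add, mul_add]; exact Submodule.add_mem _ hf hf'
        | single v c =>
            rw [hι, single_mul_single, one_mul]
            have hc : (single (g * (inl v : P ⋊[φ] E)) c)
                = c • single (g * (inl v : P ⋊[φ] E)) (1:k) := by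
              rw [smul_single', mul_one]
            rw [hc]
            exact Submodule.smul_mem _ c (Submodule.subset_span ⟨g * inl v, hr v g hg, rfl⟩)
    | zero => rw [zero_mul]; exact Submodule.zero_mem _
    | add x y _ _ hx hy => rw [add_mul]; exact Submodule.add_mem _ hx hy
    | smul c x _ hx => rw [smul_mul_assoc]; exact Submodule.smul_mem _ c hx
  -- description of kPe as a span over the coset P·e
  have hkPe : kPe k φ e
      = Submodule.span k ((fun g => single g (1:k)) '' {g : P ⋊[φ] E | g.right = e}) := by
    have hset : {x : MonoidAlgebra k (P ⋊[φ] E) |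
        ∃ u : P, x = single ((inl u : P ⋊[φ] E) * inr e) 1}
        = (fun g => single g (1:k)) '' {g : P ⋊[φ] E | g.right = e} := by
      ext x
      constructor
      · rintro ⟨u, rfl⟩
        refine ⟨inl u * inr e, ?_, rfl⟩
        have hre : ((inl u : P ⋊[φ] E) * inr e).right = e := by simp
        exact hre
      · rintro ⟨g, hg, rfl⟩
        refine ⟨g.left, ?_⟩
        have hg' : g.right = e := hg
        rw [← hg', SemidirectProduct.inl_left_mul_inr_right]
    rw [kPe, hset]
  have hsubright : ∀ (v : P) (g : P ⋊[φ] E), g.right = e → (g * inl v).right = e := by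
    intro v g hg
    simp [hg]
  have hsubleft : ∀ (v : P) (g : P ⋊[φ] E), g.right = e → ((inl v : P ⋊[φ] E) * g).right = e := by
    intro v g hg
    simp [hg]
  refine ⟨?_, ?_, ?_, ?_⟩
  · -- sub-bimodule
    intro a x hx
    rw [hkPe] at hx ⊢
    exact ⟨hleft _ (fun v g hg => hsubleft v g hg) a x hx,
      hright _ (fun v g hg => hsubright v g hg) a x hx⟩
  · -- E-stability
    intro e' x hx
    induction hx using Submodule.span_induction with
    | mem x hxs =>
        obtain ⟨u, rfl⟩ := hxs
        have hc : conjE k φ e' (single ((inl u : P ⋊[φ] E) * inr e) 1)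
            = single ((inl (φ e' u) : P ⋊[φ] E) * inr e) (1:k) := by
          show single (inr e' : P ⋊[φ] E) (1:k) * single ((inl u : P ⋊[φ] E) * inr e) 1
              * single (inr e'⁻¹ : P ⋊[φ] E) 1 = _
          rw [single_mul_single, single_mul_single, one_mul, one_mul]
          congr 1
          calc (inr e' : P ⋊[φ] E) * (inl u * inr e) * inr e'⁻¹
              = inr e' * inl u * (inr e * inr e'⁻¹) := by rw [← mul_assoc, mul_assoc]
            _ = inl (φ e' u) * inr e' * (inr e * inr e'⁻¹) := by rw [hgrp1]
            _ = inl (φ e' u) * (inr e' * (inr e * inr e'⁻¹)) := by rw [mul_assoc]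
            _ = inl (φ e' u) * inr e := by
                  rw [← map_mul, ← map_mul, hcent]
        rw [hc]
        exact Submodule.subset_span ⟨φ e' u, rfl⟩
    | zero =>
        show conjE k φ e' 0 ∈ _
        rw [conjE, mul_zero, zero_mul]
        exact Submodule.zero_mem _
    | add x y _ _ hx hy =>
        show conjE k φ e' (x + y) ∈ _
        have : conjE k φ e' (x + y) = conjE k φ e' x + conjE k φ e' y := by
          rw [conjE, conjE, conjE, mul_add, add_mul]
        rw [this]
        exact Submodule.add_mem _ hx hy
    | smul c x _ hx =>
        show conjE k φ e' (c • x) ∈ _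
        have : conjE k φ e' (c • x) = c • conjE k φ e' x := by
          rw [conjE, conjE, mul_smul_comm, smul_mul_assoc]
        rw [this]
        exact Submodule.smul_mem _ c hx
  · -- direct summand
    refine ⟨Submodule.span k ((fun g => single g (1:k)) '' {g : P ⋊[φ] E | g.right ≠ e}),
      ?_, ?_⟩
    · intro a x hx
      exact ⟨hleft _ (fun v g hg => by simpa using hg) a x hx,
        hright _ (fun v g hg => by simpa using hg) a x hx⟩
    · have h1 : kPe k φ e = MonoidAlgebra.supported k k {g : P ⋊[φ] E | g.right = e} := by
        rw [hkPe, MonoidAlgebra.supported_eq_span_single]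
      have h2 : Submodule.span k ((fun g => single g (1:k)) '' {g : P ⋊[φ] E | g.right ≠ e})
          = MonoidAlgebra.supported k k {g : P ⋊[φ] E | g.right = e}ᶜ := by
        rw [MonoidAlgebra.supported_eq_span_single]
        rfl
      rw [h1, h2, MonoidAlgebra.supported_eq_map, MonoidAlgebra.supported_eq_map]
      refine (Submodule.orderIsoMapComap
        (MonoidAlgebra.coeffLinearEquiv (S := k) (M := P ⋊[φ] E) k).symm).isCompl ?_
      constructor
      · exact Finsupp.disjoint_supported_supported disjoint_compl_right
      · rw [codisjoint_iff, ← Finsupp.supported_union, Set.union_compl_self,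
          Finsupp.supported_univ]
  · -- E-stable derivations land in J(kP)·e
    intro f hder hrange hstab
    -- the coefficient-extraction map
    have hinjf : Function.Injective (fun u : P => (inl u : P ⋊[φ] E) * inr e) := by
      intro u w huw
      have := congrArg SemidirectProduct.left huw
      simpa using this
    set rmap : MonoidAlgebra k (P ⋊[φ] E) →ₗ[k] MonoidAlgebra k P :=
      { toFun := MonoidAlgebra.comapDomain _ hinjf
        map_add' := MonoidAlgebra.comapDomain_add _ hinjf
        map_smul' := fun c x => by ext; simp [Finsupp.comapDomain_smul] } with hrmap
    have hrs : ∀ (v : P) (c : k),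
        rmap (single ((inl v : P ⋊[φ] E) * inr e) c) = single v c := by
      intro v c
      exact MonoidAlgebra.comapDomain_single_map (fun u : P => (inl u : P ⋊[φ] E) * inr e) hinjf v c
    have hL : ∀ x : MonoidAlgebra k P,
        rmap (iotaP k φ x * single (inr e : P ⋊[φ] E) 1) = x := by
      intro x
      induction x using MonoidAlgebra.induction_linear with
      | zero => rw [map_zero, zero_mul, map_zero]
      | add f' g' hf hg => rw [map_add, add_mul, map_add, hf, hg]
      | single v c => rw [hι, single_mul_single, mul_one, hrs]
    have hR : ∀ x ∈ kPe k φ e,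
        iotaP k φ (rmap x) * single (inr e : P ⋊[φ] E) 1 = x := by
      intro x hx
      induction hx using Submodule.span_induction with
      | mem x hxs =>
          obtain ⟨u, rfl⟩ := hxs
          rw [hrs, hι, single_mul_single, mul_one]
      | zero => rw [map_zero, map_zero, zero_mul]
      | add x y _ _ hx hy => rw [map_add, map_add, add_mul, hx, hy]
      | smul c x _ hx => rw [map_smul, map_smul, smul_mul_assoc, hx]
    set G : MonoidAlgebra k P →ₗ[k] MonoidAlgebra k P := rmap.comp f with hG
    have hfg : ∀ a : MonoidAlgebra k P,
        f a = iotaP k φ (G a) * single (inr e : P ⋊[φ] E) 1 :=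
      fun a => (hR (f a) (hrange (LinearMap.mem_range_self f a))).symm
    have hcancel : ∀ x y : MonoidAlgebra k P,
        iotaP k φ x * single (inr e : P ⋊[φ] E) 1
          = iotaP k φ y * single (inr e : P ⋊[φ] E) 1 → x = y := by
      intro x y hxy
      rw [← hL x, hxy, hL y]
    have hgmul : ∀ a b : MonoidAlgebra k P,
        G (a * b) = G a * domCongr k k (φ e) b + a * G b := by
      intro a b
      apply hcancel
      calc iotaP k φ (G (a * b)) * single (inr e : P ⋊[φ] E) 1
          = f (a * b) := (hfg (a*b)).symm
        _ = f a * iotaP k φ b + iotaP k φ a * f b := hder a b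
        _ = iotaP k φ (G a) * single (inr e : P ⋊[φ] E) 1 * iotaP k φ b
              + iotaP k φ a * (iotaP k φ (G b) * single (inr e : P ⋊[φ] E) 1) := by
            rw [← hfg a, ← hfg b]
        _ = iotaP k φ (G a * domCongr k k (φ e) b + a * G b)
              * single (inr e : P ⋊[φ] E) 1 := by
            rw [mul_assoc, K1 e b]
            simp only [map_add, map_mul, add_mul, mul_assoc]
    have hgE : ∀ (e' : E) (a : MonoidAlgebra k P),
        G (domCongr k k (φ e') a) = domCongr k k (φ e') (G a) := by
      intro e' a
      apply hcancel
      calc iotaP k φ (G (domCongr k k (φ e') a)) * single (inr e : P ⋊[φ] E) 1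
          = f (domCongr k k (φ e') a) := (hfg _).symm
        _ = conjE k φ e' (f a) := hstab e' a
        _ = single (inr e' : P ⋊[φ] E) 1
              * (iotaP k φ (G a) * single (inr e : P ⋊[φ] E) 1)
              * single (inr e'⁻¹ : P ⋊[φ] E) 1 := by
            rw [conjE, hfg a]
        _ = iotaP k φ (domCongr k k (φ e') (G a)) * single (inr e : P ⋊[φ] E) 1 := by
            rw [← mul_assoc, K1 e' (G a), mul_assoc, mul_assoc, hσmul, hσmul, hcent]
    -- the augmentation of G vanishes
    have hε : ∀ (u : P) (c : k), MonoidAlgebra.lift k k P 1 (single u c) = c := by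
      intro u c
      rw [MonoidAlgebra.lift_single]
      simp
    have hεdom : ∀ (e' : E) (x : MonoidAlgebra k P),
        MonoidAlgebra.lift k k P 1 (domCongr k k (φ e') x) = MonoidAlgebra.lift k k P 1 x := by
      intro e' x
      induction x using MonoidAlgebra.induction_linear with
      | zero => rw [map_zero, map_zero]
      | add f' g' hf hg => rw [map_add, map_add, hf, hg, map_add]
      | single u c => rw [domCongr_single, hε, hε]
    have hadd : ∀ u v : P,
        MonoidAlgebra.lift k k P 1 (G (single (u * v) (1:k)))
          = MonoidAlgebra.lift k k P 1 (G (single u (1:k)))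
            + MonoidAlgebra.lift k k P 1 (G (single v (1:k))) := by
      intro u v
      have h1 : (single (u*v) (1:k) : MonoidAlgebra k P) = single u 1 * single v 1 := by
        rw [single_mul_single, one_mul]
      rw [h1, hgmul, map_add, map_mul, map_mul, domCongr_single, hε, hε, mul_one, one_mul]
    have hone : MonoidAlgebra.lift k k P 1 (G (single (1:P) (1:k))) = 0 := by
      have h11 := hadd 1 1
      rw [one_mul] at h11
      exact left_eq_add.mp h11
    have hinvh : ∀ u : P,
        MonoidAlgebra.lift k k P 1 (G (single u⁻¹ (1:k)))
          = - MonoidAlgebra.lift k k P 1 (G (single u (1:k))) := by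
      intro u
      have h2 := hadd u u⁻¹
      rw [mul_inv_cancel, hone] at h2
      linear_combination -h2
    have hEinv : ∀ (e' : E) (u : P),
        MonoidAlgebra.lift k k P 1 (G (single (φ e' u) (1:k)))
          = MonoidAlgebra.lift k k P 1 (G (single u (1:k))) := by
      intro e' u
      have h3 : (single (φ e' u) (1:k) : MonoidAlgebra k P)
          = domCongr k k (φ e') (single u 1) := (domCongr_single (R := k) (A := k) (φ e') u 1).symm
      rw [h3, hgE, hεdom]
    have hall : ∀ u : P, MonoidAlgebra.lift k k P 1 (G (single u (1:k))) = 0 := by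
      let N : Subgroup P :=
        { carrier := {u : P | MonoidAlgebra.lift k k P 1 (G (single u (1:k))) = 0}
          one_mem' := hone
          mul_mem' := by
            intro a b ha hb
            have ha' : MonoidAlgebra.lift k k P 1 (G (single a (1:k))) = 0 := ha
            have hb' : MonoidAlgebra.lift k k P 1 (G (single b (1:k))) = 0 := hb
            show MonoidAlgebra.lift k k P 1 (G (single (a*b) (1:k))) = 0
            rw [hadd, ha', hb', add_zero]
          inv_mem' := by
            intro a ha
            have ha' : MonoidAlgebra.lift k k P 1 (G (single a (1:k))) = 0 := ha
            show MonoidAlgebra.lift k k P 1 (G (single a⁻¹ (1:k))) = 0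
            rw [hinvh, ha', neg_zero] }
      have hle : commSubgroupE φ ≤ N := by
        refine (Subgroup.closure_le N).mpr ?_
        rintro x ⟨e', u, rfl⟩
        show MonoidAlgebra.lift k k P 1 (G (single (φ e' u * u⁻¹) (1:k))) = 0
        rw [hadd, hEinv, hinvh, add_neg_cancel]
      intro u
      have htop : (⊤ : Subgroup P) ≤ N := hPE ▸ hle
      exact htop (Subgroup.mem_top u)
    have hεG : ∀ a : MonoidAlgebra k P, MonoidAlgebra.lift k k P 1 (G a) = 0 := by
      intro a
      induction a using MonoidAlgebra.induction_linear with
      | zero => rw [map_zero, map_zero]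
      | add f' g' hf hg => rw [map_add, map_add, hf, hg, add_zero]
      | single u c =>
          show MonoidAlgebra.lift k k P 1 (G (single u c)) = 0
          have hsc : (single u c : MonoidAlgebra k P) = c • single u 1 := by
            rw [smul_single', mul_one]
          rw [hsc, map_smul, map_smul, hall u, smul_zero]
    -- conclude
    rintro x ⟨a, rfl⟩
    refine Submodule.mem_map.mpr ⟨iotaP k φ (G a),
      Submodule.mem_map.mpr ⟨G a, aux_mem_jacRad hP (G a) (hεG a), rfl⟩, ?_⟩
    rw [LinearMap.mulRight_apply]
    exact (hfg a).symm


end Stmt6Aux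

/-- Let `P` be a finite `p`-group, `E` a finite `p'`-group acting on `P` with
`[P,E] = P`, and `e ∈ Z(E)`. Then `kP·e ⊆ k(P⋊E)` is an `E`-stable `kP`-`kP`-sub-bimodule
which is a direct summand of `k(P⋊E)` as a `kP`-`kP`-bimodule, and every `E`-stable map
`f : kP → kP·e` satisfying the Leibniz rule has image contained in `J(kP)·e`. -/
theorem stmt6 (k : Type*) [Field k] (p : ℕ) [Fact p.Prime] [CharP k p]
    (P : Type*) [Group P] [Fintype P] (hP : IsPGroup p P)
    (E : Type*) [Group E] [Fintype E] (hE : ¬ p ∣ Fintype.card E)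
    (φ : E →* MulAut P) (hPE : commSubgroupE φ = ⊤)
    (e : E) (he : e ∈ Subgroup.center E) :
    -- `kP·e` is a `kP`-`kP`-sub-bimodule of `k(P⋊E)`
    (∀ (a : MonoidAlgebra k P) (x : MonoidAlgebra k (P ⋊[φ] E)), x ∈ kPe k φ e →
      iotaP k φ a * x ∈ kPe k φ e ∧ x * iotaP k φ a ∈ kPe k φ e) ∧
    -- `kP·e` is `E`-stable
    (∀ (e' : E) (x : MonoidAlgebra k (P ⋊[φ] E)), x ∈ kPe k φ e →
      conjE k φ e' x ∈ kPe k φ e) ∧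
    -- `kP·e` is a direct summand of `k(P⋊E)` as a `kP`-`kP`-bimodule
    (∃ T : Submodule k (MonoidAlgebra k (P ⋊[φ] E)),
      (∀ (a : MonoidAlgebra k P) (x : MonoidAlgebra k (P ⋊[φ] E)), x ∈ T →
        iotaP k φ a * x ∈ T ∧ x * iotaP k φ a ∈ T) ∧
      IsCompl (kPe k φ e) T) ∧
    -- every `E`-stable derivation `kP → kP·e` has image in `J(kP)·e`
    (∀ f : MonoidAlgebra k P →ₗ[k] MonoidAlgebra k (P ⋊[φ] E),
      (∀ a b : MonoidAlgebra k P, f (a * b) = f a * iotaP k φ b + iotaP k φ a * f b) →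
      LinearMap.range f ≤ kPe k φ e →
      (∀ (e' : E) (a : MonoidAlgebra k P),
        f (MonoidAlgebra.domCongr k k (φ e') a) = conjE k φ e' (f a)) →
      LinearMap.range f ≤ Submodule.map
        (LinearMap.mulRight k (MonoidAlgebra.single ((SemidirectProduct.inr e : P ⋊[φ] E)) 1))
        ((jacRad k (MonoidAlgebra k P)).map (iotaP k φ).toLinearMap)) :=
  stmt6aux k p P hP E hE φ hPE e he

end HHPaper
end

section
/- Let k be a field of prime characteristic p, let P be a finite p-group, and let E be a finite abelian group of order prime to p acting on P by automorphisms with [P,E] = P. Then: (i) every E-stable k-linear map f : kP → k(P⋊E) satisfying the Leibniz rule f(ab) = f(a)b + a f(b) for all a,b ∈ kP (products in k(P⋊E)) has image contained in J(k(P⋊E)); (ii) every class in HH^1(k(P⋊E)) is represented by a derivation f on k(P⋊E) which vanishes on kE, and any derivation on k(P⋊E) vanishing on kE has image contained in J(k(P⋊E)). -/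
namespace HHPaper

open MonoidAlgebra

attribute [local instance] LieRing.ofAssociativeRing

section AuxFixed

variable {p : ℕ} [Fact p.Prime] {S : Type*} [AddCommGroup S]
  {P : Type*} [Group P] [Finite P]

lemma exists_fixed_vec_general (hP : IsPGroup p P) (htor : ∀ x : S, p • x = 0)
    (act : P →* AddMonoid.End S) {s : S} (hs : s ≠ 0) :
    ∃ v : S, v ≠ 0 ∧ ∀ u : P, act u v = v := by
  classical
  haveI : Module (ZMod p) S := AddCommGroup.zmodModule htor
  set O : Set S := Set.range fun u : P => act u s with hO
  set F : Submodule (ZMod p) S := Submodule.span (ZMod p) O with hF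
  haveI : Module.Finite (ZMod p) ↥F := Module.Finite.span_of_finite _ (Set.finite_range _)
  haveI : Finite ↥F := Module.finite_of_finite (ZMod p)
  have hstab : ∀ (u : P), ∀ v ∈ F, act u v ∈ F := by
    intro u v hv
    induction hv using Submodule.span_induction with
    | mem x hx =>
      obtain ⟨w, rfl⟩ := hx
      refine Submodule.subset_span ⟨u * w, ?_⟩
      show (act (u * w)) s = (act u) ((act w) s)
      rw [map_mul]; rfl
    | zero => rw [map_zero]; exact F.zero_mem
    | add x y _ _ hx hy => rw [map_add]; exact F.add_mem hx hy
    | smul r x _ hx => rw [ZMod.map_smul (act u) r x]; exact F.smul_mem r hx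
  letI : SMul P ↥F := ⟨fun u v => ⟨act u v, hstab u v v.2⟩⟩
  letI : MulAction P ↥F :=
    { one_smul := by
        intro v; apply Subtype.ext
        show (act 1) (v : S) = v
        rw [map_one]; rfl
      mul_smul := by
        intro u w v; apply Subtype.ext
        show (act (u * w)) (v : S) = (act u) ((act w) (v : S))
        rw [map_mul]; rfl }
  have hcoeact : ∀ (u : P) (v : F), ((u • v : F) : S) = act u (v : S) := fun _ _ => rfl
  have hs_mem : s ∈ F := Submodule.subset_span ⟨1, by show (act 1) s = s; rw [map_one]; rfl⟩
  have hpF : p ∣ Nat.card F := by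
    have hx : (⟨s, hs_mem⟩ : F) ≠ 0 := by
      intro h; exact hs (congrArg Subtype.val h)
    have hdvd : addOrderOf (⟨s, hs_mem⟩ : F) ∣ p :=
      addOrderOf_dvd_of_nsmul_eq_zero (by ext; simpa using htor s)
    rcases (Fact.out : p.Prime).eq_one_or_self_of_dvd _ hdvd with h1 | hp
    · exact absurd (AddMonoid.addOrderOf_eq_one_iff.mp h1) hx
    · have := addOrderOf_dvd_natCard (⟨s, hs_mem⟩ : F)
      rwa [hp] at this
  have hmod := hP.card_modEq_card_fixedPoints (α := F)
  have hpfix : p ∣ Nat.card (MulAction.fixedPoints P F) :=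
    (Nat.modEq_zero_iff_dvd).mp (hmod.symm.trans ((Nat.modEq_zero_iff_dvd).mpr hpF))
  have h0fix : (0 : F) ∈ MulAction.fixedPoints P F := by
    intro u; apply Subtype.ext
    show (act u) ((0 : F) : S) = ((0 : F) : S)
    rw [ZeroMemClass.coe_zero, map_zero]
  haveI : Nonempty (MulAction.fixedPoints P F) := ⟨⟨0, h0fix⟩⟩
  have hpos : 0 < Nat.card (MulAction.fixedPoints P F) := Nat.card_pos
  have h1lt : 1 < Nat.card (MulAction.fixedPoints P F) :=
    lt_of_lt_of_le (Fact.out : p.Prime).one_lt (Nat.le_of_dvd hpos hpfix)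
  haveI : Nontrivial (MulAction.fixedPoints P F) := by
    haveI := Fintype.ofFinite (MulAction.fixedPoints P F)
    rw [Nat.card_eq_fintype_card] at h1lt
    exact Fintype.one_lt_card_iff_nontrivial.mp h1lt
  obtain ⟨w, hw⟩ := exists_ne (⟨(0 : F), h0fix⟩ : MulAction.fixedPoints P F)
  refine ⟨((w : F) : S), ?_, ?_⟩
  · intro h
    exact hw (Subtype.ext (Subtype.ext h))
  · intro u
    exact congrArg Subtype.val (w.2 u)

end AuxFixed

section AuxJac

open MonoidAlgebra SemidirectProduct

set_option linter.unusedSectionVars false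

variable {k : Type*} [Field k] {p : ℕ} [Fact p.Prime] [CharP k p]
  {P E : Type*} [Group P] [Fintype P] [CommGroup E] [Fintype E] {φ : E →* MulAut P}

lemma single_quotient_smul (hP : IsPGroup p P)
    (M : Ideal (MonoidAlgebra k (P ⋊[φ] E))) (hM : M.IsMaximal) (u : P)
    (s : MonoidAlgebra k (P ⋊[φ] E) ⧸ M) :
    (single (inl u : P ⋊[φ] E) (1 : k) : MonoidAlgebra k (P ⋊[φ] E)) • s = s := by
  classical
  haveI : Nontrivial (MonoidAlgebra k (P ⋊[φ] E) ⧸ M) :=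
    Submodule.Quotient.nontrivial_iff.mpr hM.ne_top
  haveI : IsSimpleModule (MonoidAlgebra k (P ⋊[φ] E)) (MonoidAlgebra k (P ⋊[φ] E) ⧸ M) :=
    isSimpleModule_iff_isCoatom.mpr (Ideal.isMaximal_def.mp hM)
  have key : ∀ (u : P) (g : P ⋊[φ] E) (c : k),
      (single (inl u : P ⋊[φ] E) (1 : k) : MonoidAlgebra k (P ⋊[φ] E)) * single g c
        = single g c * single (inl ((φ g.right)⁻¹ (g.left⁻¹ * u * g.left)) : P ⋊[φ] E) 1 := by
    intro u g c
    rw [single_mul_single, single_mul_single, mul_one, one_mul]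
    congr 1
    ext
    · simp [mul_left, mul_right, mul_assoc]
    · simp [mul_left, mul_right]
  set V : Submodule (MonoidAlgebra k (P ⋊[φ] E)) (MonoidAlgebra k (P ⋊[φ] E) ⧸ M) :=
    { carrier := {v | ∀ u : P,
        (single (inl u : P ⋊[φ] E) (1 : k) : MonoidAlgebra k (P ⋊[φ] E)) • v = v}
      add_mem' := by intro a b ha hb u; rw [smul_add, ha u, hb u]
      zero_mem' := by intro u; rw [smul_zero]
      smul_mem' := by
        intro a v hv u
        rw [← mul_smul]
        have H : ∀ a : MonoidAlgebra k (P ⋊[φ] E),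
            ((single (inl u : P ⋊[φ] E) (1 : k) : MonoidAlgebra k (P ⋊[φ] E)) * a) • v
              = a • v := by
          intro a
          induction a using MonoidAlgebra.induction_linear with
          | zero => rw [mul_zero]
          | add f g hf hg => rw [mul_add, add_smul, hf, hg, ← add_smul]
          | single g c => rw [key u g c, mul_smul, hv _]
        exact H a } with hV
  have htor : ∀ x : MonoidAlgebra k (P ⋊[φ] E) ⧸ M, p • x = 0 := by
    intro x
    obtain ⟨y, rfl⟩ := Submodule.Quotient.mk_surjective M x
    have hy : (p : MonoidAlgebra k (P ⋊[φ] E)) = 0 := by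
      rw [← map_natCast (algebraMap k (MonoidAlgebra k (P ⋊[φ] E))), CharP.cast_eq_zero k p,
        map_zero]
    rw [← Submodule.mkQ_apply, ← map_nsmul, nsmul_eq_mul, hy, zero_mul, map_zero]
  obtain ⟨s₀, hs₀⟩ := exists_ne (0 : MonoidAlgebra k (P ⋊[φ] E) ⧸ M)
  set act : P →* AddMonoid.End (MonoidAlgebra k (P ⋊[φ] E) ⧸ M) :=
    { toFun := fun u => DistribMulAction.toAddMonoidHom _
        (single (inl u : P ⋊[φ] E) (1 : k) : MonoidAlgebra k (P ⋊[φ] E))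
      map_one' := by
        refine AddMonoidHom.ext fun v => ?_
        show (single (inl (1 : P) : P ⋊[φ] E) (1 : k) : MonoidAlgebra k (P ⋊[φ] E)) • v = v
        rw [map_one, ← one_def, one_smul]
      map_mul' := by
        intro u w
        refine AddMonoidHom.ext fun v => ?_
        show (single (inl (u * w) : P ⋊[φ] E) (1 : k) : MonoidAlgebra k (P ⋊[φ] E)) • v
          = (single (inl u : P ⋊[φ] E) (1 : k) : MonoidAlgebra k (P ⋊[φ] E)) •
            ((single (inl w : P ⋊[φ] E) (1 : k) : MonoidAlgebra k (P ⋊[φ] E)) • v)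
        rw [← mul_smul, single_mul_single, one_mul, map_mul] } with hactdef
  obtain ⟨v, hv0, hvfix⟩ := exists_fixed_vec_general hP htor act hs₀
  have hVne : V ≠ ⊥ := by
    intro hbot
    have hvV : v ∈ V := fun u => hvfix u
    rw [hbot, Submodule.mem_bot] at hvV
    exact hv0 hvV
  have hVtop : V = ⊤ := (eq_bot_or_eq_top V).resolve_left hVne
  have hsV : s ∈ V := by rw [hVtop]; trivial
  exact hsV u

lemma ker_eps_le_jacobson (hP : IsPGroup p P) (x : MonoidAlgebra k (P ⋊[φ] E))
    (hx : mapDomainAlgHom k k (SemidirectProduct.rightHom : P ⋊[φ] E →* E) x = 0) :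
    x ∈ Ideal.jacobson (⊥ : Ideal (MonoidAlgebra k (P ⋊[φ] E))) := by
  classical
  rw [Ideal.jacobson]
  rw [Submodule.mem_sInf]
  rintro M ⟨-, hM⟩
  have key : ∀ a : MonoidAlgebra k (P ⋊[φ] E),
      M.mkQ a = M.mkQ (mapDomainAlgHom k k (inr : E →* P ⋊[φ] E)
        (mapDomainAlgHom k k (SemidirectProduct.rightHom : P ⋊[φ] E →* E) a)) := by
    intro a
    induction a using MonoidAlgebra.induction_linear with
    | zero => simp only [map_zero]
    | add f g hf hg => rw [map_add, map_add, map_add, map_add, hf, hg]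
    | single g c =>
      show M.mkQ (single g c) = M.mkQ (mapDomainAlgHom k k (inr : E →* P ⋊[φ] E)
        (mapDomainAlgHom k k (SemidirectProduct.rightHom : P ⋊[φ] E →* E) (single g c)))
      have hg : (single g c : MonoidAlgebra k (P ⋊[φ] E))
          = (single (inl g.left : P ⋊[φ] E) (1 : k) : MonoidAlgebra k (P ⋊[φ] E))
            * single (inr g.right : P ⋊[φ] E) c := by
        rw [single_mul_single, one_mul, inl_left_mul_inr_right]
      have h1 : M.mkQ ((single (inl g.left : P ⋊[φ] E) (1 : k) : MonoidAlgebra k (P ⋊[φ] E))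
          * single (inr g.right : P ⋊[φ] E) c)
          = (single (inl g.left : P ⋊[φ] E) (1 : k) : MonoidAlgebra k (P ⋊[φ] E))
            • M.mkQ (single (inr g.right : P ⋊[φ] E) c) := by
        rw [← smul_eq_mul, map_smul]
      have h2 : mapDomainAlgHom k k (inr : E →* P ⋊[φ] E)
          (mapDomainAlgHom k k (SemidirectProduct.rightHom : P ⋊[φ] E →* E) (single g c))
          = single (inr g.right : P ⋊[φ] E) c := by
        simp [mapDomainAlgHom]
      rw [h2, hg, h1, single_quotient_smul hP M hM]
  have hkx := key x
  rw [hx, map_zero, map_zero] at hkx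
  rwa [← Submodule.Quotient.mk_eq_zero, ← Submodule.mkQ_apply]

end AuxJac

/-- Let `P` be a finite `p`-group and `E` a finite abelian `p'`-group acting
on `P` with `[P,E] = P`. Then: (i) every `E`-stable map `f : kP → k(P⋊E)` satisfying the
Leibniz rule has image contained in `J(k(P⋊E))`;
(ii) every class in `HH^1(k(P⋊E))` is represented by a derivation vanishing on `kE`, and any
derivation on `k(P⋊E)` vanishing on `kE` has image contained in `J(k(P⋊E))`. -/
theorem stmt7 (k : Type*) [Field k] (p : ℕ) [Fact p.Prime] [CharP k p]
    (P : Type*) [Group P] [Fintype P] (hP : IsPGroup p P)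
    (E : Type*) [CommGroup E] [Fintype E] (hE : ¬ p ∣ Fintype.card E)
    (φ : E →* MulAut P) (hPE : commSubgroupE φ = ⊤) :
    -- (i)
    (∀ f : MonoidAlgebra k P →ₗ[k] MonoidAlgebra k (P ⋊[φ] E),
      (∀ a b : MonoidAlgebra k P, f (a * b) = f a * iotaP k φ b + iotaP k φ a * f b) →
      (∀ (e : E) (a : MonoidAlgebra k P),
        f (MonoidAlgebra.domCongr k k (φ e) a) = conjE k φ e (f a)) →
      LinearMap.range f ≤ jacRad k (MonoidAlgebra k (P ⋊[φ] E))) ∧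
    -- (ii) every class has a representative vanishing on `kE` ...
    (∀ f : Module.End k (MonoidAlgebra k (P ⋊[φ] E)), IsDerivation f →
      ∃ c : MonoidAlgebra k (P ⋊[φ] E), ∀ e : E,
        (f - innerDeriv k c) (MonoidAlgebra.single (SemidirectProduct.inr e : P ⋊[φ] E) 1)
          = 0) ∧
    -- ... and any derivation vanishing on `kE` has image in `J(k(P⋊E))`
    (∀ f : Module.End k (MonoidAlgebra k (P ⋊[φ] E)), IsDerivation f →
      (∀ e : E, f (MonoidAlgebra.single (SemidirectProduct.inr e : P ⋊[φ] E) 1) = 0) →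
      LinearMap.range f ≤ jacRad k (MonoidAlgebra k (P ⋊[φ] E))) := by
  classical
  have heps : ∀ (g : P ⋊[φ] E) (c : k),
      mapDomainAlgHom k k (SemidirectProduct.rightHom : P ⋊[φ] E →* E) (single g c)
        = single (SemidirectProduct.rightHom g) c := by
    intro g c; simp [mapDomainAlgHom]
  have hiota : ∀ (v : P) (c : k),
      iotaP k φ (single v c) = single (SemidirectProduct.inl v : P ⋊[φ] E) c := by
    intro v c; simp [mapDomainAlgHom]
  refine ⟨?_, ?_, ?_⟩
  · -- part (i)
    intro f hLeib hstab x hx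
    obtain ⟨a, rfl⟩ := hx
    rw [jacRad, Submodule.restrictScalars_mem]
    apply ker_eps_le_jacobson (φ := φ) hP
    have hei : ∀ (v : P) (c : k),
        mapDomainAlgHom k k (SemidirectProduct.rightHom : P ⋊[φ] E →* E)
          (iotaP k φ (single v c)) = single (1 : E) c := by
      intro v c
      rw [hiota, heps, SemidirectProduct.rightHom_inl]
    have hm : ∀ u v : P,
        mapDomainAlgHom k k (SemidirectProduct.rightHom : P ⋊[φ] E →* E) (f (single (u * v) 1))
          = mapDomainAlgHom k k (SemidirectProduct.rightHom : P ⋊[φ] E →* E) (f (single u 1))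
            + mapDomainAlgHom k k (SemidirectProduct.rightHom : P ⋊[φ] E →* E)
              (f (single v 1)) := by
      intro u v
      have h0 := hLeib (single u 1) (single v 1)
      rw [single_mul_single, one_mul] at h0
      have h1 := congrArg
        (mapDomainAlgHom k k (SemidirectProduct.rightHom : P ⋊[φ] E →* E)) h0
      rw [map_add, map_mul, map_mul, hei, hei, ← one_def, mul_one, one_mul] at h1
      exact h1
    have hone : mapDomainAlgHom k k (SemidirectProduct.rightHom : P ⋊[φ] E →* E)
        (f (single (1 : P) 1)) = 0 := by
      have h0 := hm 1 1
      rw [mul_one] at h0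
      exact left_eq_add.mp h0
    have hinv : ∀ u : P,
        mapDomainAlgHom k k (SemidirectProduct.rightHom : P ⋊[φ] E →* E) (f (single u⁻¹ 1))
          = - mapDomainAlgHom k k (SemidirectProduct.rightHom : P ⋊[φ] E →* E)
              (f (single u 1)) := by
      intro u
      have h0 := hm u u⁻¹
      rw [mul_inv_cancel, hone] at h0
      exact eq_neg_of_add_eq_zero_right h0.symm
    have hc : ∀ (e : E) (u : P),
        mapDomainAlgHom k k (SemidirectProduct.rightHom : P ⋊[φ] E →* E)
          (f (single (φ e u) 1))
          = mapDomainAlgHom k k (SemidirectProduct.rightHom : P ⋊[φ] E →* E)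
              (f (single u 1)) := by
      intro e u
      have h0 := hstab e (single u 1)
      rw [MonoidAlgebra.domCongr_single] at h0
      have h1 := congrArg
        (mapDomainAlgHom k k (SemidirectProduct.rightHom : P ⋊[φ] E →* E)) h0
      rw [conjE, map_mul, map_mul, heps, heps, SemidirectProduct.rightHom_inr,
        SemidirectProduct.rightHom_inr, mul_comm, ← mul_assoc, single_mul_single,
        inv_mul_cancel, one_mul, ← one_def, one_mul] at h1
      exact h1
    have hall : ∀ u : P,
        mapDomainAlgHom k k (SemidirectProduct.rightHom : P ⋊[φ] E →* E)
          (f (single u 1)) = 0 := by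
      have hgen : ∀ u : P, u ∈ commSubgroupE φ →
          mapDomainAlgHom k k (SemidirectProduct.rightHom : P ⋊[φ] E →* E)
            (f (single u 1)) = 0 := by
        intro u hu
        rw [commSubgroupE] at hu
        induction hu using Subgroup.closure_induction with
        | mem x hx =>
          obtain ⟨e, w, rfl⟩ := hx
          rw [hm, hc, hinv w, add_neg_cancel]
        | one => exact hone
        | mul x y hx hy ihx ihy => rw [hm, ihx, ihy, add_zero]
        | inv x hx ihx => rw [hinv, ihx, neg_zero]
      intro u
      exact hgen u (by rw [hPE]; trivial)
    have hzero : ∀ a : MonoidAlgebra k P,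
        mapDomainAlgHom k k (SemidirectProduct.rightHom : P ⋊[φ] E →* E) (f a) = 0 := by
      intro a
      induction a using MonoidAlgebra.induction_linear with
      | zero => rw [map_zero, map_zero]
      | add a b ha hb => rw [map_add, map_add, ha, hb, add_zero]
      | single u c =>
        show mapDomainAlgHom k k (SemidirectProduct.rightHom : P ⋊[φ] E →* E)
          (f (single u c)) = 0
        have hs : (single u c : MonoidAlgebra k P) = c • single u 1 := by
          rw [MonoidAlgebra.smul_single, smul_eq_mul, mul_one]
        rw [hs, map_smul, map_smul, hall u, smul_zero]
    exact hzero a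
  · -- part (ii) : averaging
    intro f hf
    have hcard : ((Fintype.card E : k)) ≠ 0 := by
      intro h0
      exact hE ((CharP.cast_eq_zero_iff k p _).mp h0)
    set ν : k := (Fintype.card E : k)⁻¹ with hν
    set eh : E → MonoidAlgebra k (P ⋊[φ] E) :=
      fun e => single (SemidirectProduct.inr e : P ⋊[φ] E) (1 : k) with heh
    have hee : ∀ a b : E, eh a * eh b = eh (a * b) := by
      intro a b
      simp only [heh]
      rw [single_mul_single, one_mul, ← map_mul]
    have heinv : ∀ a : E, eh a * eh a⁻¹ = 1 := by
      intro a
      rw [hee, mul_inv_cancel]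
      simp only [heh]
      rw [map_one, ← one_def]
    set S : MonoidAlgebra k (P ⋊[φ] E) := ∑ e : E, f (eh e) * eh e⁻¹ with hS
    refine ⟨ν • S, fun e₀ => ?_⟩
    rw [LinearMap.sub_apply, innerDeriv_apply]
    have hgoalrw : (single (SemidirectProduct.inr e₀ : P ⋊[φ] E) (1 : k)
        : MonoidAlgebra k (P ⋊[φ] E)) = eh e₀ := by simp only [heh]
    rw [hgoalrw]
    have hterm : ∀ e : E, eh e₀ * (f (eh e) * eh e⁻¹)
        = f (eh (e₀ * e)) * eh (e₀ * e)⁻¹ * eh e₀ - f (eh e₀) := by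
      intro e
      have hfm := hf (eh e₀) (eh e)
      rw [hee] at hfm
      have h1 : eh e₀ * f (eh e) = f (eh (e₀ * e)) - f (eh e₀) * eh e := by
        rw [hfm, add_sub_cancel_left]
      have hgrp : (e₀ * e)⁻¹ * e₀ = e⁻¹ := by group
      calc eh e₀ * (f (eh e) * eh e⁻¹) = eh e₀ * f (eh e) * eh e⁻¹ := by rw [mul_assoc]
        _ = (f (eh (e₀ * e)) - f (eh e₀) * eh e) * eh e⁻¹ := by rw [h1]
        _ = f (eh (e₀ * e)) * eh e⁻¹ - f (eh e₀) * (eh e * eh e⁻¹) := by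
            rw [sub_mul, mul_assoc]
        _ = f (eh (e₀ * e)) * eh e⁻¹ - f (eh e₀) := by rw [heinv, mul_one]
        _ = f (eh (e₀ * e)) * (eh (e₀ * e)⁻¹ * eh e₀) - f (eh e₀) := by
            rw [hee, hgrp]
        _ = f (eh (e₀ * e)) * eh (e₀ * e)⁻¹ * eh e₀ - f (eh e₀) := by rw [← mul_assoc]
    have key : eh e₀ * S = S * eh e₀ - (Fintype.card E) • f (eh e₀) := by
      calc eh e₀ * S = ∑ e : E, eh e₀ * (f (eh e) * eh e⁻¹) := by rw [hS, Finset.mul_sum]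
        _ = ∑ e : E, (f (eh (e₀ * e)) * eh (e₀ * e)⁻¹ * eh e₀ - f (eh e₀)) :=
            Finset.sum_congr rfl (fun e _ => hterm e)
        _ = (∑ e : E, f (eh (e₀ * e)) * eh (e₀ * e)⁻¹ * eh e₀)
            - (Fintype.card E) • f (eh e₀) := by
            rw [Finset.sum_sub_distrib, Finset.sum_const, Finset.card_univ]
        _ = (∑ e : E, f (eh e) * eh e⁻¹ * eh e₀) - (Fintype.card E) • f (eh e₀) := by
            congr 1
            exact Fintype.sum_equiv (Equiv.mulLeft e₀) _ _ (fun e => rfl)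
        _ = S * eh e₀ - (Fintype.card E) • f (eh e₀) := by rw [hS, Finset.sum_mul]
    rw [smul_mul_assoc, mul_smul_comm, key, smul_sub, ← Nat.cast_smul_eq_nsmul k,
      smul_smul, hν, inv_mul_cancel₀ hcard, one_smul, sub_sub_cancel]
    exact sub_self _
  · -- part (iii)
    intro f hder hvanish x hx
    obtain ⟨a, rfl⟩ := hx
    rw [jacRad, Submodule.restrictScalars_mem]
    apply ker_eps_le_jacobson (φ := φ) hP
    have hvan : ∀ (e : E) (c : k),
        f (single (SemidirectProduct.inr e : P ⋊[φ] E) c) = 0 := by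
      intro e c
      have hs : (single (SemidirectProduct.inr e : P ⋊[φ] E) c
          : MonoidAlgebra k (P ⋊[φ] E))
          = c • single (SemidirectProduct.inr e : P ⋊[φ] E) (1 : k) := by
        rw [MonoidAlgebra.smul_single, smul_eq_mul, mul_one]
      rw [hs, map_smul, hvanish e, smul_zero]
    have hepse : ∀ e : E,
        mapDomainAlgHom k k (SemidirectProduct.rightHom : P ⋊[φ] E →* E)
          (single (SemidirectProduct.inr e : P ⋊[φ] E) (1 : k)) = single e 1 := by
      intro e
      rw [heps, SemidirectProduct.rightHom_inr]
    have hepsl : ∀ u : P,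
        mapDomainAlgHom k k (SemidirectProduct.rightHom : P ⋊[φ] E →* E)
          (single (SemidirectProduct.inl u : P ⋊[φ] E) (1 : k))
          = (1 : MonoidAlgebra k E) := by
      intro u
      rw [heps, SemidirectProduct.rightHom_inl, ← one_def]
    have hm : ∀ u v : P,
        mapDomainAlgHom k k (SemidirectProduct.rightHom : P ⋊[φ] E →* E)
          (f (single (SemidirectProduct.inl (u * v) : P ⋊[φ] E) 1))
          = mapDomainAlgHom k k (SemidirectProduct.rightHom : P ⋊[φ] E →* E)
              (f (single (SemidirectProduct.inl u : P ⋊[φ] E) 1))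
            + mapDomainAlgHom k k (SemidirectProduct.rightHom : P ⋊[φ] E →* E)
              (f (single (SemidirectProduct.inl v : P ⋊[φ] E) 1)) := by
      intro u v
      have hmul_inl : (single (SemidirectProduct.inl u : P ⋊[φ] E) (1 : k))
          * single (SemidirectProduct.inl v : P ⋊[φ] E) (1 : k)
          = single (SemidirectProduct.inl (u * v) : P ⋊[φ] E) (1 : k) := by
        rw [single_mul_single, one_mul, ← map_mul]
      have h0 := hder (single (SemidirectProduct.inl u : P ⋊[φ] E) 1)
        (single (SemidirectProduct.inl v : P ⋊[φ] E) 1)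
      rw [hmul_inl] at h0
      have h1 : mapDomainAlgHom k k (SemidirectProduct.rightHom : P ⋊[φ] E →* E)
          (f (single (SemidirectProduct.inl (u * v) : P ⋊[φ] E) 1))
          = mapDomainAlgHom k k (SemidirectProduct.rightHom : P ⋊[φ] E →* E)
              (f (single (SemidirectProduct.inl u : P ⋊[φ] E) 1))
            * mapDomainAlgHom k k (SemidirectProduct.rightHom : P ⋊[φ] E →* E)
              (single (SemidirectProduct.inl v : P ⋊[φ] E) 1)
          + mapDomainAlgHom k k (SemidirectProduct.rightHom : P ⋊[φ] E →* E)
              (single (SemidirectProduct.inl u : P ⋊[φ] E) 1)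
            * mapDomainAlgHom k k (SemidirectProduct.rightHom : P ⋊[φ] E →* E)
              (f (single (SemidirectProduct.inl v : P ⋊[φ] E) 1)) := by
        rw [h0, map_add, map_mul, map_mul]
      rw [hepsl, hepsl, mul_one, one_mul] at h1
      exact h1
    have hone : mapDomainAlgHom k k (SemidirectProduct.rightHom : P ⋊[φ] E →* E)
        (f (single (SemidirectProduct.inl (1 : P) : P ⋊[φ] E) 1)) = 0 := by
      have h0 := hm 1 1
      rw [mul_one] at h0
      exact left_eq_add.mp h0
    have hinv : ∀ u : P,
        mapDomainAlgHom k k (SemidirectProduct.rightHom : P ⋊[φ] E →* E)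
          (f (single (SemidirectProduct.inl u⁻¹ : P ⋊[φ] E) 1))
          = - mapDomainAlgHom k k (SemidirectProduct.rightHom : P ⋊[φ] E →* E)
              (f (single (SemidirectProduct.inl u : P ⋊[φ] E) 1)) := by
      intro u
      have h0 := hm u u⁻¹
      rw [mul_inv_cancel, hone] at h0
      exact eq_neg_of_add_eq_zero_right h0.symm
    have hc : ∀ (e : E) (u : P),
        mapDomainAlgHom k k (SemidirectProduct.rightHom : P ⋊[φ] E →* E)
          (f (single (SemidirectProduct.inl (φ e u) : P ⋊[φ] E) 1))
          = mapDomainAlgHom k k (SemidirectProduct.rightHom : P ⋊[φ] E →* E)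
              (f (single (SemidirectProduct.inl u : P ⋊[φ] E) 1)) := by
      intro e u
      have hg : (single (SemidirectProduct.inl (φ e u) : P ⋊[φ] E) (1 : k)
          : MonoidAlgebra k (P ⋊[φ] E))
          = single (SemidirectProduct.inr e : P ⋊[φ] E) 1
            * single (SemidirectProduct.inl u : P ⋊[φ] E) 1
            * single (SemidirectProduct.inr e⁻¹ : P ⋊[φ] E) 1 := by
        rw [single_mul_single, single_mul_single, one_mul, one_mul,
          SemidirectProduct.inl_aut, map_inv]
      have h2 := hder (single (SemidirectProduct.inr e : P ⋊[φ] E) 1)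
        (single (SemidirectProduct.inl u : P ⋊[φ] E) 1)
      rw [hvanish e, zero_mul, zero_add] at h2
      have h1 := hder (single (SemidirectProduct.inr e : P ⋊[φ] E) 1
        * single (SemidirectProduct.inl u : P ⋊[φ] E) 1)
        (single (SemidirectProduct.inr e⁻¹ : P ⋊[φ] E) 1)
      rw [hvanish e⁻¹, mul_zero, add_zero, h2] at h1
      have h1' : f (single (SemidirectProduct.inl (φ e u) : P ⋊[φ] E) 1)
          = single (SemidirectProduct.inr e : P ⋊[φ] E) 1
            * f (single (SemidirectProduct.inl u : P ⋊[φ] E) 1)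
            * single (SemidirectProduct.inr e⁻¹ : P ⋊[φ] E) 1 := by
        rw [hg]; exact h1
      have h3 : mapDomainAlgHom k k (SemidirectProduct.rightHom : P ⋊[φ] E →* E)
          (f (single (SemidirectProduct.inl (φ e u) : P ⋊[φ] E) 1))
          = mapDomainAlgHom k k (SemidirectProduct.rightHom : P ⋊[φ] E →* E)
              (single (SemidirectProduct.inr e : P ⋊[φ] E) (1 : k))
            * mapDomainAlgHom k k (SemidirectProduct.rightHom : P ⋊[φ] E →* E)
              (f (single (SemidirectProduct.inl u : P ⋊[φ] E) 1))
            * mapDomainAlgHom k k (SemidirectProduct.rightHom : P ⋊[φ] E →* E)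
              (single (SemidirectProduct.inr e⁻¹ : P ⋊[φ] E) (1 : k)) := by
        rw [h1', map_mul, map_mul]
      rw [hepse, hepse, mul_comm, ← mul_assoc, single_mul_single,
        inv_mul_cancel, one_mul, ← one_def, one_mul] at h3
      exact h3
    have hall : ∀ u : P,
        mapDomainAlgHom k k (SemidirectProduct.rightHom : P ⋊[φ] E →* E)
          (f (single (SemidirectProduct.inl u : P ⋊[φ] E) 1)) = 0 := by
      have hgen : ∀ u : P, u ∈ commSubgroupE φ →
          mapDomainAlgHom k k (SemidirectProduct.rightHom : P ⋊[φ] E →* E)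
            (f (single (SemidirectProduct.inl u : P ⋊[φ] E) 1)) = 0 := by
        intro u hu
        rw [commSubgroupE] at hu
        induction hu using Subgroup.closure_induction with
        | mem x hx =>
          obtain ⟨e, w, rfl⟩ := hx
          rw [hm, hc, hinv w, add_neg_cancel]
        | one => exact hone
        | mul x y hx hy ihx ihy => rw [hm, ihx, ihy, add_zero]
        | inv x hx ihx => rw [hinv, ihx, neg_zero]
      intro u
      exact hgen u (by rw [hPE]; trivial)
    have hzero : ∀ a : MonoidAlgebra k (P ⋊[φ] E),
        mapDomainAlgHom k k (SemidirectProduct.rightHom : P ⋊[φ] E →* E) (f a) = 0 := by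
      intro a
      induction a using MonoidAlgebra.induction_linear with
      | zero => rw [map_zero, map_zero]
      | add a b ha hb => rw [map_add, map_add, ha, hb, add_zero]
      | single g c =>
        show mapDomainAlgHom k k (SemidirectProduct.rightHom : P ⋊[φ] E →* E)
          (f (single g c)) = 0
        have hg2 : (single g c : MonoidAlgebra k (P ⋊[φ] E))
            = single (SemidirectProduct.inl g.left : P ⋊[φ] E) (1 : k)
              * single (SemidirectProduct.inr g.right : P ⋊[φ] E) c := by
          rw [single_mul_single, one_mul, SemidirectProduct.inl_left_mul_inr_right]
        rw [hg2, hder, hvan, mul_zero, add_zero, map_mul, hall g.left, zero_mul]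
    exact hzero a

end HHPaper
end
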